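/- (Baker's identity, 1905) Let w_1, w_2 be monomials of lengths n_1 ≥ 1 and n_2 ≥ 1 in the free associative algebra over a field of characteristic ≠ 2. Then η(w_1·η(w_2)) = (−1)^{n_2}·(η(w_1)·η(w_2) − η(w_2)·η(w_1)), where on the left-hand side η is applied to the element obtained by multiplying w_1 with the (generally non-monomial) element η(w_2), extending η linearly over the resulting sum of monomials. -/

import Mathlib

noncomputable section

abbrev FA (k : Type*) [Field k] (p : ℕ) := MonoidAlgebra k (FreeMonoid (Fin p))

def mon (k : Type*) [Field k] {p : ℕ} (l : List (Fin p)) : FA k p :=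
  MonoidAlgebra.of k (FreeMonoid (Fin p)) (FreeMonoid.ofList l)

def etaRev (k : Type*) [Field k] {p : ℕ} : List (Fin p) → FA k p
  | [] => 0
  | [a] => mon k [a]
  | a :: b :: l => mon k [a] * etaRev k (b :: l) - etaRev k (b :: l) * mon k [a]

def etaList (k : Type*) [Field k] {p : ℕ} (l : List (Fin p)) : FA k p :=
  etaRev k l.reverse

def etaLin (k : Type*) [Field k] (p : ℕ) : FA k p →ₗ[k] FA k p :=
  Finsupp.lift (FA k p) k (FreeMonoid (Fin p)) (fun w => etaList k (FreeMonoid.toList w)) ∘ₗ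
    (MonoidAlgebra.coeffLinearEquiv k (S := k) (M := FreeMonoid (Fin p))).toLinearMap

/-! ### Auxiliary definitions and lemmas -/

def adE (k : Type*) [Field k] {p : ℕ} (x : FA k p) : Module.End k (FA k p) :=
  LinearMap.mulLeft k x - LinearMap.mulRight k x

lemma adE_apply (k : Type*) [Field k] {p : ℕ} (x c : FA k p) :
    adE k x c = x * c - c * x := rfl

/-- The anti-representation sending a word `b₁⋯bₘ` to `ad(bₘ)∘⋯∘ad(b₁)` (in the opposite
algebra of endomorphisms, so that it becomes an algebra homomorphism). -/
def L (k : Type*) [Field k] (p : ℕ) : FA k p →ₐ[k] (Module.End k (FA k p))ᵐᵒᵖ :=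
  MonoidAlgebra.lift k _ (FreeMonoid (Fin p))
    (FreeMonoid.lift fun a => MulOpposite.op (adE k (mon k [a])))

lemma L_single (k : Type*) [Field k] {p : ℕ} (a : Fin p) :
    L k p (mon k [a]) = MulOpposite.op (adE k (mon k [a])) := by
  simp [L, mon]

lemma mon_append (k : Type*) [Field k] {p : ℕ} (l₁ l₂ : List (Fin p)) :
    mon k (l₁ ++ l₂) = mon k l₁ * mon k l₂ := by
  simp [mon, ← map_mul]

lemma etaLin_mon (k : Type*) [Field k] {p : ℕ} (l : List (Fin p)) :
    etaLin k p (mon k l) = etaList k l := by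
  show (Finsupp.lift (FA k p) k (FreeMonoid (Fin p)) fun w => etaList k (FreeMonoid.toList w))
      (Finsupp.single (FreeMonoid.ofList l) 1) = etaList k l
  rw [Finsupp.lift_apply, Finsupp.sum_single_index (by simp), one_smul]
  simp

lemma etaList_concat (k : Type*) [Field k] {p : ℕ} (s : List (Fin p)) (hs : s ≠ [])
    (a : Fin p) :
    etaList k (s ++ [a]) = mon k [a] * etaList k s - etaList k s * mon k [a] := by
  unfold etaList
  rw [List.reverse_append]
  rcases h : s.reverse with _ | ⟨b, l⟩
  · exact absurd (by simpa using h) hs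
  · simp [etaRev]

/-- `η(u·v) = Λ(v)(η(u))` for nonempty `u`. -/
lemma L_mon_apply (k : Type*) [Field k] {p : ℕ} (u : List (Fin p)) (hu : u ≠ []) :
    ∀ v : List (Fin p), (L k p (mon k v)).unop (etaList k u) = etaList k (u ++ v) := by
  intro v
  induction v using List.reverseRecOn with
  | nil =>
    have : mon k ([] : List (Fin p)) = 1 := rfl
    rw [this, map_one]
    simp
  | append_singleton v a ih =>
    rw [mon_append, map_mul, MulOpposite.unop_mul, Module.End.mul_apply, ih, L_single,
      MulOpposite.unop_op, adE_apply, ← List.append_assoc,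
      etaList_concat k (u ++ v) (by simp [hu]) a]

lemma baker_step {k R : Type*} [CommRing k] [Ring R] [Module k R]
    [SMulCommClass k R R] [IsScalarTower k R R] (s : k) (A e c : R) :
    s • (e * (A * c - c * A) - (A * c - c * A) * e) -
      (A * s • (e * c - c * e) - s • (e * c - c * e) * A) =
    (s * -1) • ((A * e - e * A) * c - c * (A * e - e * A)) := by
  rw [mul_smul_comm, smul_mul_assoc, ← smul_sub, ← smul_sub, mul_neg_one, neg_smul, ← smul_neg]
  congr 1
  noncomm_ring

/-- The key lemma: `Λ(η(w)) = (−1)^{|w|−1}·ad(η(w))` for nonempty `w`. -/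
lemma L_eta (k : Type*) [Field k] {p : ℕ} (w : List (Fin p)) (hw : w ≠ []) (c : FA k p) :
    (L k p (etaList k w)).unop c =
      ((-1 : k) ^ (w.length - 1)) • (etaList k w * c - c * etaList k w) := by
  induction w using List.reverseRecOn generalizing c with
  | nil => exact absurd rfl hw
  | append_singleton w a ih =>
    rcases eq_or_ne w [] with rfl | hw'
    · show (L k p (etaList k [a])).unop c = _
      have h1 : etaList k [a] = mon k [a] := rfl
      rw [h1, L_single, MulOpposite.unop_op, adE_apply]
      simp [← h1]
    · have he : etaList k (w ++ [a]) = mon k [a] * etaList k w - etaList k w * mon k [a] :=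
        etaList_concat k w hw' a
      set e := etaList k w with hedef
      set A := mon k [a] with hA
      have hlen : (w ++ [a]).length - 1 = (w.length - 1) + 1 := by
        have : 1 ≤ w.length := List.length_pos_iff.mpr hw'
        simp [List.length_append]
        omega
      rw [he, map_sub, map_mul, map_mul, MulOpposite.unop_sub, MulOpposite.unop_mul,
        MulOpposite.unop_mul, LinearMap.sub_apply, Module.End.mul_apply, Module.End.mul_apply,
        L_single, MulOpposite.unop_op, adE_apply, ih hw' _, ih hw' c, adE_apply]
      rw [hlen, pow_succ]
      set s := ((-1 : k) ^ (w.length - 1)) with hs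
      exact baker_step s (mon k [a]) e c

lemma etaLin_mulLeft (k : Type*) [Field k] {p : ℕ} (w₁ : List (Fin p)) (hw₁ : w₁ ≠ [])
    (z : FA k p) :
    etaLin k p (mon k w₁ * z) = (L k p z).unop (etaList k w₁) := by
  induction z using MonoidAlgebra.induction_linear with
  | zero => simp
  | add f g hf hg => rw [mul_add, map_add, map_add, MulOpposite.unop_add,
      LinearMap.add_apply, hf, hg]
  | single x b =>
    have hx : (MonoidAlgebra.single x b : FA k p) = b • mon k (FreeMonoid.toList x) := by
      rw [mon]
      simp [MonoidAlgebra.of_apply, MonoidAlgebra.smul_single']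
    rw [hx, mul_smul_comm, map_smul, map_smul, MulOpposite.unop_smul, LinearMap.smul_apply,
      ← mon_append, etaLin_mon, L_mon_apply k w₁ hw₁]

/-- Baker's identity: η(w₁·η(w₂)) = (−1)^{n₂}·(η(w₁)·η(w₂) − η(w₂)·η(w₁)). -/
theorem baker (k : Type*) [Field k] (hk : ringChar k ≠ 2) {p n₁ n₂ : ℕ}
    (w₁ w₂ : List (Fin p)) (h₁ : w₁.length = n₁) (h₂ : w₂.length = n₂)
    (hn₁ : 1 ≤ n₁) (hn₂ : 1 ≤ n₂) :
    etaLin k p (mon k w₁ * etaLin k p (mon k w₂)) =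
      ((-1 : k) ^ n₂) •
        (etaLin k p (mon k w₁) * etaLin k p (mon k w₂) -
         etaLin k p (mon k w₂) * etaLin k p (mon k w₁)) := by
  have hw₁ : w₁ ≠ [] := by rw [← List.length_pos_iff, h₁]; omega
  have hw₂ : w₂ ≠ [] := by rw [← List.length_pos_iff, h₂]; omega
  rw [etaLin_mon, etaLin_mon, etaLin_mulLeft k w₁ hw₁,
    L_eta k w₂ hw₂ (etaList k w₁), h₂]
  have : n₂ = (n₂ - 1) + 1 := by omega
  rw [this, pow_succ]
  simp only [Nat.add_sub_cancel]
  rw [mul_neg_one, neg_smul, ← smul_neg]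
  congr 1
  abel
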